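/- With parameters x₁ = (ϱ₁+ϱ₂)/(ϱ₂λ₁*n), y₁ = ϱ₂/(ϱ₁λ₂*n), x₂ = (ϱ₁+ϱ₂)/(ϱ₁λ₂*n), y₂ = ϱ₁/(ϱ₂λ₁*n), the derivative of the Lyapunov function F along trajectories of the mean-field IRIR system equals −(1/n)·((I₁/R₁)δ₁² + (I₂/R₂)δ₂² + (δ₁+δ₂)²), where δᵢ = Rᵢ − Rᵢ*; in particular it is nonpositive whenever I₁, I₂, R₁, R₂ > 0. -/

import Mathlib

noncomputable def f (xs x : ℝ) : ℝ := xs * (x / xs - Real.log (x / xs) - 1)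

noncomputable def F (x1 y1 x2 y2 I1s R1s I2s R2s I1 R1 I2 R2 : ℝ) : ℝ :=
  x1 * f I1s I1 + y1 * f R1s R1 + x2 * f I2s I2 + y2 * f R2s R2

lemma f_hasDeriv (xs x : ℝ) (hxs : xs ≠ 0) (hx : x ≠ 0) :
    HasDerivAt (fun z => f xs z) (1 - xs / x) x := by
  have h1 : HasDerivAt (fun z : ℝ => z / xs) (1 / xs) x := by
    simpa using (hasDerivAt_id x).div_const xs
  have h2 : HasDerivAt (fun z : ℝ => Real.log (z / xs)) (1 / x) x := by
    have hne : x / xs ≠ 0 := div_ne_zero hx hxs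
    have := h1.log hne
    convert this using 1
    field_simp
  have h3 := ((h1.sub h2).sub_const 1).const_mul xs
  refine h3.congr_deriv ?_
  field_simp

theorem stmt_6 (lam1 lam2 rho1 rho2 n : ℝ)
    (hlam1 : 0 < lam1) (hlam2 : 0 < lam2) (hrho1 : 0 < rho1) (hrho2 : 0 < rho2)
    (hn : 0 < n)
    (I1s R1s I2s R2s x1 y1 x2 y2 : ℝ)
    (hR1s : R1s = rho2 / lam2) (hR2s : R2s = rho1 / lam1)
    (hI1s : I1s = (n - R1s - R2s) * (rho2 / (rho1 + rho2)))
    (hI2s : I2s = (n - R1s - R2s) * (rho1 / (rho1 + rho2)))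
    (hthr : R1s + R2s < n)
    (hx1 : x1 = (rho1 + rho2) / (rho2 * lam1 * n))
    (hy1 : y1 = rho2 / (rho1 * lam2 * n))
    (hx2 : x2 = (rho1 + rho2) / (rho1 * lam2 * n))
    (hy2 : y2 = rho1 / (rho2 * lam1 * n))
    (I1 R1 I2 R2 : ℝ)
    (hI1 : 0 < I1) (hR1 : 0 < R1) (hI2 : 0 < I2) (hR2 : 0 < R2)
    (hsum : I1 + I2 + R1 + R2 = n) :
    deriv (fun z => F x1 y1 x2 y2 I1s R1s I2s R2s z R1 I2 R2) I1 *
        (lam1 * I1 * R2 - rho1 * I1) +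
      deriv (fun z => F x1 y1 x2 y2 I1s R1s I2s R2s I1 z I2 R2) R1 *
        (rho1 * I1 - lam2 * I2 * R1) +
      deriv (fun z => F x1 y1 x2 y2 I1s R1s I2s R2s I1 R1 z R2) I2 *
        (lam2 * I2 * R1 - rho2 * I2) +
      deriv (fun z => F x1 y1 x2 y2 I1s R1s I2s R2s I1 R1 I2 z) R2 *
        (rho2 * I2 - lam1 * I1 * R2) =
      -(1 / n) * ((I1 / R1) * (R1 - R1s) ^ 2 + (I2 / R2) * (R2 - R2s) ^ 2 +
        ((R1 - R1s) + (R2 - R2s)) ^ 2) ∧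
    -(1 / n) * ((I1 / R1) * (R1 - R1s) ^ 2 + (I2 / R2) * (R2 - R2s) ^ 2 +
        ((R1 - R1s) + (R2 - R2s)) ^ 2) ≤ 0 := by
  have hdiff : 0 < n - R1s - R2s := by linarith
  have hI1s0 : 0 < I1s := by
    rw [hI1s]; positivity
  have hI2s0 : 0 < I2s := by
    rw [hI2s]; positivity
  have hR1s0 : 0 < R1s := by rw [hR1s]; positivity
  have hR2s0 : 0 < R2s := by rw [hR2s]; positivity
  have d1 : deriv (fun z => F x1 y1 x2 y2 I1s R1s I2s R2s z R1 I2 R2) I1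
      = x1 * (1 - I1s / I1) := by
    have h := (((f_hasDeriv I1s I1 hI1s0.ne' hI1.ne').const_mul x1).add_const
      (y1 * f R1s R1 + x2 * f I2s I2 + y2 * f R2s R2))
    have he : (fun z => F x1 y1 x2 y2 I1s R1s I2s R2s z R1 I2 R2)
        = fun z => x1 * f I1s z + (y1 * f R1s R1 + x2 * f I2s I2 + y2 * f R2s R2) := by
      funext z; simp [F]; ring
    rw [he]; exact h.deriv
  have d2 : deriv (fun z => F x1 y1 x2 y2 I1s R1s I2s R2s I1 z I2 R2) R1
      = y1 * (1 - R1s / R1) := by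
    have h := (((f_hasDeriv R1s R1 hR1s0.ne' hR1.ne').const_mul y1).add_const
      (x1 * f I1s I1 + x2 * f I2s I2 + y2 * f R2s R2))
    have he : (fun z => F x1 y1 x2 y2 I1s R1s I2s R2s I1 z I2 R2)
        = fun z => y1 * f R1s z + (x1 * f I1s I1 + x2 * f I2s I2 + y2 * f R2s R2) := by
      funext z; simp [F]; ring
    rw [he]; exact h.deriv
  have d3 : deriv (fun z => F x1 y1 x2 y2 I1s R1s I2s R2s I1 R1 z R2) I2
      = x2 * (1 - I2s / I2) := by
    have h := (((f_hasDeriv I2s I2 hI2s0.ne' hI2.ne').const_mul x2).add_const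
      (x1 * f I1s I1 + y1 * f R1s R1 + y2 * f R2s R2))
    have he : (fun z => F x1 y1 x2 y2 I1s R1s I2s R2s I1 R1 z R2)
        = fun z => x2 * f I2s z + (x1 * f I1s I1 + y1 * f R1s R1 + y2 * f R2s R2) := by
      funext z; simp [F]; ring
    rw [he]; exact h.deriv
  have d4 : deriv (fun z => F x1 y1 x2 y2 I1s R1s I2s R2s I1 R1 I2 z) R2
      = y2 * (1 - R2s / R2) := by
    have h := (((f_hasDeriv R2s R2 hR2s0.ne' hR2.ne').const_mul y2).add_const
      (x1 * f I1s I1 + y1 * f R1s R1 + x2 * f I2s I2))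
    have he : (fun z => F x1 y1 x2 y2 I1s R1s I2s R2s I1 R1 I2 z)
        = fun z => y2 * f R2s z + (x1 * f I1s I1 + y1 * f R1s R1 + x2 * f I2s I2) := by
      funext z; simp [F]; ring
    rw [he]; exact h.deriv
  constructor
  · rw [d1, d2, d3, d4]
    subst hR1s hR2s hI1s hI2s hx1 hy1 hx2 hy2
    subst hsum
    field_simp
    ring
  · rw [neg_mul, neg_nonpos]
    positivity
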